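/- arXiv:1902.03213 — 4 statements merged into one kernel-verified Lean document; each statement's English description precedes it below -/
import Mathlib

section
/- ex_3(n, B_2 K_3) = (1 + o(1))·n²/2: the maximum number of hyperedges in a 3-uniform hypergraph on n vertices with no 2-wise Berge triangle is asymptotically n²/2. -/
open Finset

/-- `H` contains a `t`-heavy copy of the graph `F`: an injective placement of `V(F)`
such that every edge of `F` is contained in at least `t` hyperedges of `H`. -/
def HasHeavyCopy {V α : Type*} [DecidableEq V] (H : Finset (Finset V))
    (F : SimpleGraph α) (t : ℕ) : Prop :=
  ∃ i : α ↪ V, ∀ x y, F.Adj x y →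
    t ≤ (H.filter (fun A => i x ∈ A ∧ i y ∈ A)).card

/-- `H` contains a `t`-wise Berge copy of the graph `F`: an injective placement of `V(F)`
together with `t` hyperedges assigned to each edge of `F`, pairwise disjoint over distinct
edges, each containing both endpoints of its edge. -/
def HasBergeCopy {V α : Type*} (H : Finset (Finset V))
    (F : SimpleGraph α) (t : ℕ) : Prop :=
  ∃ (i : α ↪ V) (h : Sym2 α → Finset (Finset V)),
    (∀ e ∈ F.edgeSet, h e ⊆ H ∧ (h e).card = t ∧ ∀ A ∈ h e, ∀ x ∈ e, i x ∈ A) ∧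
    ∀ e ∈ F.edgeSet, ∀ e' ∈ F.edgeSet, e ≠ e' → Disjoint (h e) (h e')

/-- The Turán number of `t`-heavy copies of `F` for `r`-uniform hypergraphs on `n` vertices. -/
noncomputable def exHeavy {α : Type*} (n r t : ℕ) (F : SimpleGraph α) : ℕ :=
  sSup {m | ∃ H : Finset (Finset (Fin n)), (∀ A ∈ H, A.card = r) ∧
    ¬ HasHeavyCopy H F t ∧ H.card = m}

/-- The Turán number of `t`-wise Berge copies of `F` for `r`-uniform hypergraphs on `n` vertices. -/
noncomputable def exBerge {α : Type*} (n r t : ℕ) (F : SimpleGraph α) : ℕ :=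
  sSup {m | ∃ H : Finset (Finset (Fin n)), (∀ A ∈ H, A.card = r) ∧
    ¬ HasBergeCopy H F t ∧ H.card = m}

/-- `G` contains a copy of `F` as a subgraph. -/
def GraphContains {α β : Type*} (F : SimpleGraph α) (G : SimpleGraph β) : Prop :=
  ∃ f : α ↪ β, ∀ x y, F.Adj x y → G.Adj (f x) (f y)

/-- The number of `r`-cliques of `G`. -/
noncomputable def cliqueCount {β : Type*} [Fintype β] [DecidableEq β]
    (r : ℕ) (G : SimpleGraph β) : ℕ :=
  letI := Classical.decRel G.Adj
  (G.cliqueFinset r).card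

/-- The number of edges of `G`. -/
noncomputable def edgeCount {β : Type*} [Fintype β] [DecidableEq β] (G : SimpleGraph β) : ℕ :=
  letI := Classical.decRel G.Adj
  G.edgeFinset.card

/-- The generalized Turán number `ex(n, K_r, F)`. -/
noncomputable def exClique {α : Type*} (n r : ℕ) (F : SimpleGraph α) : ℕ :=
  sSup {m | ∃ G : SimpleGraph (Fin n), ¬ GraphContains F G ∧ cliqueCount r G = m}

/-- The Turán number `ex(n, F)`. -/
noncomputable def exTuran {α : Type*} (n : ℕ) (F : SimpleGraph α) : ℕ :=
  sSup {m | ∃ G : SimpleGraph (Fin n), ¬ GraphContains F G ∧ edgeCount G = m}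


namespace BergeProof
open Finset

variable {n : ℕ}

def mult (H : Finset (Finset (Fin n))) (p : Finset (Fin n)) : ℕ :=
  (H.filter (fun A => p ⊆ A)).card

lemma eq_of_mem_three (H : Finset (Finset (Fin n))) (h3 : ∀ A ∈ H, A.card = 3)
    {u v w : Fin n} (huv : u ≠ v) (huw : u ≠ w) (hvw : v ≠ w)
    {A : Finset (Fin n)} (hA : A ∈ H) (hu : u ∈ A) (hv : v ∈ A) (hw : w ∈ A) :
    A = {u, v, w} := by
  have hsub : ({u, v, w} : Finset (Fin n)) ⊆ A := by
    intro x hx; simp at hx; rcases hx with rfl|rfl|rfl <;> assumption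
  have hcard : ({u,v,w} : Finset (Fin n)).card = 3 := by
    rw [card_insert_of_notMem (by simp [huv, huw]),
        card_insert_of_notMem (by simp [hvw]), card_singleton]
  exact (eq_of_subset_of_card_le hsub (by rw [h3 A hA, hcard])).symm


lemma inj3 {α : Type*} {u v w : α} (huv : u ≠ v) (huw : u ≠ w) (hvw : v ≠ w) :
    Function.Injective ![u, v, w] := by
  intro a b hab
  fin_cases a <;> fin_cases b <;>
    first
      | rfl
      | (simp only [Matrix.cons_val_zero, Matrix.cons_val_one, Matrix.head_cons,
          Matrix.cons_val_two, Matrix.tail_cons] at hab;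
         first
           | exact absurd hab huv | exact absurd hab.symm huv
           | exact absurd hab huw | exact absurd hab.symm huw
           | exact absurd hab hvw | exact absurd hab.symm hvw)

lemma key (H : Finset (Finset (Fin n))) (h3 : ∀ A ∈ H, A.card = 3)
    (hB : ¬ HasBergeCopy H (⊤ : SimpleGraph (Fin 3)) 2)
    {u v w : Fin n} (huv : u ≠ v) (huw : u ≠ w) (hvw : v ≠ w)
    (m1 : 3 ≤ mult H {u, v}) (m2 : 3 ≤ mult H {u, w}) (m3 : 2 ≤ mult H {v, w}) :
    False := by
  classical
  apply hB
  set Euv := H.filter (fun A => ({u, v} : Finset (Fin n)) ⊆ A) with hEuv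
  set Euw := H.filter (fun A => ({u, w} : Finset (Fin n)) ⊆ A) with hEuw
  set Evw := H.filter (fun A => ({v, w} : Finset (Fin n)) ⊆ A) with hEvw
  have hmemuv : ∀ A ∈ Euv, A ∈ H ∧ u ∈ A ∧ v ∈ A := by
    intro A hA; rw [hEuv, mem_filter, insert_subset_iff, singleton_subset_iff] at hA
    exact ⟨hA.1, hA.2.1, hA.2.2⟩
  have hmemuw : ∀ A ∈ Euw, A ∈ H ∧ u ∈ A ∧ w ∈ A := by
    intro A hA; rw [hEuw, mem_filter, insert_subset_iff, singleton_subset_iff] at hA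
    exact ⟨hA.1, hA.2.1, hA.2.2⟩
  have hmemvw : ∀ A ∈ Evw, A ∈ H ∧ v ∈ A ∧ w ∈ A := by
    intro A hA; rw [hEvw, mem_filter, insert_subset_iff, singleton_subset_iff] at hA
    exact ⟨hA.1, hA.2.1, hA.2.2⟩
  -- any member of two different E's equals {u,v,w}
  have hT : ∀ A, ((A ∈ Euv ∧ A ∈ Euw) ∨ (A ∈ Euv ∧ A ∈ Evw) ∨ (A ∈ Euw ∧ A ∈ Evw)) →
      A = ({u, v, w} : Finset (Fin n)) := by
    intro A hA
    rcases hA with ⟨h1, h2⟩ | ⟨h1, h2⟩ | ⟨h1, h2⟩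
    · exact eq_of_mem_three H h3 huv huw hvw (hmemuv A h1).1 (hmemuv A h1).2.1
        (hmemuv A h1).2.2 (hmemuw A h2).2.2
    · exact eq_of_mem_three H h3 huv huw hvw (hmemuv A h1).1 (hmemuv A h1).2.1
        (hmemuv A h1).2.2 (hmemvw A h2).2.2
    · exact eq_of_mem_three H h3 huv huw hvw (hmemuw A h1).1 (hmemuw A h1).2.1
        (hmemvw A h2).2.1 (hmemuw A h1).2.2
  -- pick the sets
  obtain ⟨Svw, hSvw_sub, hSvw_card⟩ := exists_subset_card_eq m3
  have hint1 : (Euw ∩ Svw).card ≤ 1 := by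
    apply card_le_one.2
    intro a ha b hb
    rw [mem_inter] at ha hb
    rw [hT a (Or.inr (Or.inr ⟨ha.1, hSvw_sub ha.2⟩)),
        hT b (Or.inr (Or.inr ⟨hb.1, hSvw_sub hb.2⟩))]
  have hcard1 : 2 ≤ (Euw \ Svw).card := by
    have h := card_sdiff_add_card_inter Euw Svw
    have h2 : Euw.card = mult H {u, w} := rfl
    omega
  obtain ⟨Suw, hSuw_sub, hSuw_card⟩ := exists_subset_card_eq hcard1
  have hint2 : (Euv ∩ (Svw ∪ Suw)).card ≤ 1 := by
    apply card_le_one.2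
    intro a ha b hb
    rw [mem_inter, mem_union] at ha hb
    have key : ∀ c, c ∈ Euv → c ∈ Svw ∪ Suw → c = ({u, v, w} : Finset (Fin n)) := by
      intro c hc1 hc2
      rw [mem_union] at hc2
      rcases hc2 with hc2 | hc2
      · exact hT c (Or.inr (Or.inl ⟨hc1, hSvw_sub hc2⟩))
      · exact hT c (Or.inl ⟨hc1, (mem_sdiff.1 (hSuw_sub hc2)).1⟩)
    rw [key a ha.1 (mem_union.2 ha.2), key b hb.1 (mem_union.2 hb.2)]
  have hcard2 : 2 ≤ (Euv \ (Svw ∪ Suw)).card := by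
    have h := card_sdiff_add_card_inter Euv (Svw ∪ Suw)
    have h2 : Euv.card = mult H {u, v} := rfl
    omega
  obtain ⟨Suv, hSuv_sub, hSuv_card⟩ := exists_subset_card_eq hcard2
  -- the embedding
  have hinj : Function.Injective ![u, v, w] := inj3 huv huw hvw
  have hSuvEuv : Suv ⊆ Euv := fun a ha => (mem_sdiff.1 (hSuv_sub ha)).1
  have hSuwEuw : Suw ⊆ Euw := fun a ha => (mem_sdiff.1 (hSuw_sub ha)).1
  have d1 : Disjoint Suv Svw := by
    rw [disjoint_left]
    intro a ha hb
    exact (mem_sdiff.1 (hSuv_sub ha)).2 (mem_union_left _ hb)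
  have d2 : Disjoint Suv Suw := by
    rw [disjoint_left]
    intro a ha hb
    exact (mem_sdiff.1 (hSuv_sub ha)).2 (mem_union_right _ hb)
  have d3 : Disjoint Svw Suw := by
    rw [disjoint_left]
    intro a ha hb
    exact (mem_sdiff.1 (hSuw_sub hb)).2 ha
  have htri : ∀ f ∈ (⊤ : SimpleGraph (Fin 3)).edgeSet,
      f = s((0 : Fin 3), 1) ∨ f = s((1 : Fin 3), 2) ∨ f = s((0 : Fin 3), 2) := by
    intro f hf
    induction f using Sym2.ind with
    | _ x y =>
      rw [SimpleGraph.mem_edgeSet] at hf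
      revert hf
      revert x y
      decide
  let hfun : Sym2 (Fin 3) → Finset (Finset (Fin n)) :=
    fun e => if (0 : Fin 3) ∈ e then (if (1 : Fin 3) ∈ e then Suv else Suw) else Svw
  have ev01 : hfun s(0, 1) = Suv := by simp [hfun, Sym2.mem_iff]
  have ev12 : hfun s(1, 2) = Svw := by simp [hfun, Sym2.mem_iff]
  have ev02 : hfun s(0, 2) = Suw := by simp [hfun, Sym2.mem_iff]
  refine ⟨⟨![u, v, w], hinj⟩, hfun, ?_, ?_⟩
  · intro e he
    rcases htri e he with rfl | rfl | rfl
    · rw [ev01]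
      refine ⟨fun a ha => (hmemuv a (hSuvEuv ha)).1, hSuv_card, ?_⟩
      intro A hA x hx
      rw [Sym2.mem_iff] at hx
      rcases hx with rfl | rfl
      · exact (hmemuv A (hSuvEuv hA)).2.1
      · exact (hmemuv A (hSuvEuv hA)).2.2
    · rw [ev12]
      refine ⟨fun a ha => (hmemvw a (hSvw_sub ha)).1, hSvw_card, ?_⟩
      intro A hA x hx
      rw [Sym2.mem_iff] at hx
      rcases hx with rfl | rfl
      · exact (hmemvw A (hSvw_sub hA)).2.1
      · exact (hmemvw A (hSvw_sub hA)).2.2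
    · rw [ev02]
      refine ⟨fun a ha => (hmemuw a (hSuwEuw ha)).1, hSuw_card, ?_⟩
      intro A hA x hx
      rw [Sym2.mem_iff] at hx
      rcases hx with rfl | rfl
      · exact (hmemuw A (hSuwEuw hA)).2.1
      · exact (hmemuw A (hSuwEuw hA)).2.2
  · intro e he e' he' hne
    rcases htri e he with rfl | rfl | rfl <;> rcases htri e' he' with rfl | rfl | rfl
    · exact absurd rfl hne
    · rw [ev01, ev12]; exact d1
    · rw [ev01, ev02]; exact d2
    · rw [ev12, ev01]; exact d1.symm
    · exact absurd rfl hne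
    · rw [ev12, ev02]; exact d3
    · rw [ev02, ev01]; exact d2.symm
    · rw [ev02, ev12]; exact d3.symm
    · exact absurd rfl hne

lemma pair_subset_triple {u v w x y : Fin n} (hxy : x ≠ y)
    (hx : x ∈ ({u, v, w} : Finset (Fin n))) (hy : y ∈ ({u, v, w} : Finset (Fin n))) :
    ({x, y} : Finset (Fin n)) = {u, v} ∨ ({x, y} : Finset (Fin n)) = {u, w} ∨
      ({x, y} : Finset (Fin n)) = {v, w} := by
  simp only [mem_insert, mem_singleton] at hx hy
  rcases hx with rfl | rfl | rfl <;> rcases hy with rfl | rfl | rfl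
  · exact absurd rfl hxy
  · exact Or.inl rfl
  · exact Or.inr (Or.inl rfl)
  · exact Or.inl (pair_comm x y)
  · exact absurd rfl hxy
  · exact Or.inr (Or.inr rfl)
  · exact Or.inr (Or.inl (pair_comm x y))
  · exact Or.inr (Or.inr (pair_comm x y))
  · exact absurd rfl hxy

lemma upper (H : Finset (Finset (Fin n))) (h3 : ∀ A ∈ H, A.card = 3)
    (hB : ¬ HasBergeCopy H (⊤ : SimpleGraph (Fin 3)) 2) :
    H.card ≤ n.choose 2 := by
  classical
  set P := (univ : Finset (Fin n)).powersetCard 2 with hP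
  set M1 := P.filter (fun p => mult H p = 1) with hM1
  set M2 := P.filter (fun p => mult H p = 2) with hM2
  set M3 := P.filter (fun p => 3 ≤ mult H p) with hM3
  have hswap : ∀ Q : Finset (Finset (Fin n)), ∑ p ∈ Q, mult H p
      = ∑ A ∈ H, (Q.filter (fun p => p ⊆ A)).card := by
    intro Q
    simp only [mult, card_filter]
    exact Finset.sum_comm
  have hsum : ∑ p ∈ P, mult H p = 3 * H.card := by
    rw [hswap]
    have hone : ∀ A ∈ H, (P.filter (fun p => p ⊆ A)).card = 3 := by
      intro A hA
      have hPA : P.filter (fun p => p ⊆ A) = A.powersetCard 2 := by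
        ext p
        simp only [hP, mem_filter, mem_powersetCard, subset_univ, true_and]
        tauto
      rw [hPA, card_powersetCard, h3 A hA]
      decide
    rw [Finset.sum_congr rfl hone, Finset.sum_const, smul_eq_mul, mul_comm]
  -- per-hyperedge claim
  have hper : ∀ A ∈ H, (M3.filter (fun p => p ⊆ A)).card
      ≤ 1 + (M1.filter (fun p => p ⊆ A)).card := by
    intro A hA
    obtain ⟨u, v, w, huv, huw, hvw, hAeq⟩ := Finset.card_eq_three.mp (h3 A hA)
    subst hAeq
    have hmultpos : ∀ p : Finset (Fin n), p ⊆ ({u, v, w} : Finset (Fin n)) → 1 ≤ mult H p :=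
      fun p hp => card_pos.2 ⟨_, mem_filter.2 ⟨hA, hp⟩⟩
    have pasub : ({u, v} : Finset (Fin n)) ⊆ {u, v, w} := by
      intro x hx; simp only [mem_insert, mem_singleton] at hx ⊢; tauto
    have pbsub : ({u, w} : Finset (Fin n)) ⊆ {u, v, w} := by
      intro x hx; simp only [mem_insert, mem_singleton] at hx ⊢; tauto
    have pcsub : ({v, w} : Finset (Fin n)) ⊆ {u, v, w} := by
      intro x hx; simp only [mem_insert, mem_singleton] at hx ⊢; tauto
    have paP : ({u, v} : Finset (Fin n)) ∈ P := by
      rw [hP, mem_powersetCard]; exact ⟨subset_univ _, card_pair huv⟩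
    have pbP : ({u, w} : Finset (Fin n)) ∈ P := by
      rw [hP, mem_powersetCard]; exact ⟨subset_univ _, card_pair huw⟩
    have pcP : ({v, w} : Finset (Fin n)) ∈ P := by
      rw [hP, mem_powersetCard]; exact ⟨subset_univ _, card_pair hvw⟩
    have hsub3 : ∀ p ∈ M3.filter (fun p => p ⊆ ({u, v, w} : Finset (Fin n))),
        (p = {u, v} ∨ p = {u, w} ∨ p = {v, w}) ∧ 3 ≤ mult H p := by
      intro p hp
      rw [mem_filter] at hp
      obtain ⟨hp1, hp2⟩ := hp
      rw [hM3, mem_filter] at hp1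
      obtain ⟨hp3, hp4⟩ := hp1
      rw [hP, mem_powersetCard] at hp3
      obtain ⟨x, y, hxy, rfl⟩ := Finset.card_eq_two.mp hp3.2
      refine ⟨pair_subset_triple hxy (hp2 (by simp)) (hp2 (by simp)), hp4⟩
    have hM1mem : ∀ p : Finset (Fin n), p ∈ P → p ⊆ ({u, v, w} : Finset (Fin n)) →
        mult H p = 1 → 1 ≤ (M1.filter (fun q => q ⊆ ({u, v, w} : Finset (Fin n)))).card := by
      intro p hp1 hp2 hp3
      exact card_pos.2 ⟨p, mem_filter.2 ⟨by rw [hM1, mem_filter]; exact ⟨hp1, hp3⟩, hp2⟩⟩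
    have hboundpair : ∀ q r : Finset (Fin n),
        (∀ p : Finset (Fin n), (p = {u, v} ∨ p = {u, w} ∨ p = {v, w}) → 3 ≤ mult H p →
          p = q ∨ p = r) →
        (M3.filter (fun p => p ⊆ ({u, v, w} : Finset (Fin n)))).card ≤ 2 := by
      intro q r hqr
      have hss : M3.filter (fun p => p ⊆ ({u, v, w} : Finset (Fin n)))
          ⊆ insert q (insert r (∅ : Finset (Finset (Fin n)))) := by
        intro p hp
        have h := hsub3 p hp
        rcases hqr p h.1 h.2 with rfl | rfl
        · exact mem_insert_self _ _
        · exact mem_insert_of_mem (mem_insert_self _ _)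
      have ha := card_insert_le q (insert r (∅ : Finset (Finset (Fin n))))
      have hb := card_insert_le r (∅ : Finset (Finset (Fin n)))
      have hc := card_le_card hss
      simp only [card_empty] at hb
      omega
    have hboundone : ∀ q : Finset (Fin n),
        (∀ p : Finset (Fin n), (p = {u, v} ∨ p = {u, w} ∨ p = {v, w}) → 3 ≤ mult H p →
          p = q) →
        (M3.filter (fun p => p ⊆ ({u, v, w} : Finset (Fin n)))).card ≤ 1 := by
      intro q hq
      have hss : M3.filter (fun p => p ⊆ ({u, v, w} : Finset (Fin n)))
          ⊆ insert q (∅ : Finset (Finset (Fin n))) := by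
        intro p hp
        have h := hsub3 p hp
        rw [hq p h.1 h.2]
        exact mem_insert_self _ _
      have ha := card_insert_le q (∅ : Finset (Finset (Fin n)))
      have hc := card_le_card hss
      simp only [card_empty] at ha
      omega
    by_cases c1 : 3 ≤ mult H ({u, v} : Finset (Fin n)) <;>
      by_cases c2 : 3 ≤ mult H ({u, w} : Finset (Fin n)) <;>
      by_cases c3 : 3 ≤ mult H ({v, w} : Finset (Fin n))
    · exact absurd (key H h3 hB huv huw hvw c1 c2 (by omega)) id
    · -- c1 c2 ¬c3
      have hc3' : mult H ({v, w} : Finset (Fin n)) = 1 := by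
        have h2 : ¬ 2 ≤ mult H ({v, w} : Finset (Fin n)) :=
          fun h => key H h3 hB huv huw hvw c1 c2 h
        have := hmultpos _ pcsub
        omega
      have hle := hboundpair {u, v} {u, w} (by
        intro p hp h3p
        rcases hp with rfl | rfl | rfl
        · exact Or.inl rfl
        · exact Or.inr rfl
        · omega)
      have h1 := hM1mem _ pcP pcsub hc3'
      omega
    · -- c1 ¬c2 c3
      have hc2' : mult H ({u, w} : Finset (Fin n)) = 1 := by
        have h2 : ¬ 2 ≤ mult H ({u, w} : Finset (Fin n)) :=
          fun h => key H h3 hB huv.symm hvw huw (by rw [pair_comm v u]; exact c1) c3 h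
        have := hmultpos _ pbsub
        omega
      have hle := hboundpair {u, v} {v, w} (by
        intro p hp h3p
        rcases hp with rfl | rfl | rfl
        · exact Or.inl rfl
        · omega
        · exact Or.inr rfl)
      have h1 := hM1mem _ pbP pbsub hc2'
      omega
    · -- c1 ¬c2 ¬c3
      have hle := hboundone {u, v} (by
        intro p hp h3p
        rcases hp with rfl | rfl | rfl
        · rfl
        · omega
        · omega)
      omega
    · -- ¬c1 c2 c3
      have hc1' : mult H ({u, v} : Finset (Fin n)) = 1 := by
        have h2 : ¬ 2 ≤ mult H ({u, v} : Finset (Fin n)) :=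
          fun h => key H h3 hB huw.symm hvw.symm huv (by rw [pair_comm w u]; exact c2)
            (by rw [pair_comm w v]; exact c3) h
        have := hmultpos _ pasub
        omega
      have hle := hboundpair {u, w} {v, w} (by
        intro p hp h3p
        rcases hp with rfl | rfl | rfl
        · omega
        · exact Or.inl rfl
        · exact Or.inr rfl)
      have h1 := hM1mem _ paP pasub hc1'
      omega
    · -- ¬c1 c2 ¬c3
      have hle := hboundone {u, w} (by
        intro p hp h3p
        rcases hp with rfl | rfl | rfl
        · omega
        · rfl
        · omega)
      omega
    · -- ¬c1 ¬c2 c3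
      have hle := hboundone {v, w} (by
        intro p hp h3p
        rcases hp with rfl | rfl | rfl
        · omega
        · omega
        · rfl)
      omega
    · -- none
      have hle := hboundone {u, v} (by
        intro p hp h3p
        rcases hp with rfl | rfl | rfl
        · rfl
        · omega
        · omega)
      omega
  -- assemble the count
  have hsplit : ∑ p ∈ P, mult H p
      = ∑ p ∈ M3, mult H p + ∑ p ∈ P.filter (fun p => ¬ 3 ≤ mult H p), mult H p := by
    rw [hM3]
    exact (Finset.sum_filter_add_sum_filter_not P _ _).symm
  have hM3sum : ∑ p ∈ M3, mult H p ≤ H.card + M1.card := by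
    rw [hswap M3]
    calc ∑ A ∈ H, (M3.filter (fun p => p ⊆ A)).card
        ≤ ∑ A ∈ H, (1 + (M1.filter (fun p => p ⊆ A)).card) := Finset.sum_le_sum hper
      _ = H.card + ∑ A ∈ H, (M1.filter (fun p => p ⊆ A)).card := by
          rw [Finset.sum_add_distrib, Finset.sum_const, smul_eq_mul, mul_one]
      _ = H.card + ∑ p ∈ M1, mult H p := by rw [hswap M1]
      _ = H.card + M1.card := by
          congr 1
          rw [Finset.sum_congr rfl (fun p hp => (mem_filter.1 hp).2), Finset.sum_const,
            smul_eq_mul, mul_one]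
  have hlowsum : ∑ p ∈ P.filter (fun p => ¬ 3 ≤ mult H p), mult H p
      ≤ M1.card + 2 * M2.card := by
    calc ∑ p ∈ P.filter (fun p => ¬ 3 ≤ mult H p), mult H p
        ≤ ∑ p ∈ P.filter (fun p => ¬ 3 ≤ mult H p),
            ((if mult H p = 1 then 1 else 0) + (if mult H p = 2 then 2 else 0)) := by
          refine Finset.sum_le_sum (fun p hp => ?_)
          have h2 : ¬ 3 ≤ mult H p := (mem_filter.1 hp).2
          split_ifs <;> omega
      _ = ((P.filter (fun p => ¬ 3 ≤ mult H p)).filter (fun p => mult H p = 1)).card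
          + ∑ p ∈ P.filter (fun p => ¬ 3 ≤ mult H p), (if mult H p = 2 then 2 else 0) := by
          rw [Finset.sum_add_distrib, card_filter]
      _ = ((P.filter (fun p => ¬ 3 ≤ mult H p)).filter (fun p => mult H p = 1)).card
          + 2 * ((P.filter (fun p => ¬ 3 ≤ mult H p)).filter (fun p => mult H p = 2)).card := by
          congr 1
          rw [card_filter, Finset.mul_sum]
          exact Finset.sum_congr rfl (fun p _ => by split_ifs <;> ring)
      _ = M1.card + 2 * M2.card := by
          have e1 : (P.filter (fun p => ¬ 3 ≤ mult H p)).filter (fun p => mult H p = 1)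
              = M1 := by
            rw [filter_filter, hM1]
            exact filter_congr (fun p _ => ⟨fun h => h.2, fun h => ⟨by omega, h⟩⟩)
          have e2 : (P.filter (fun p => ¬ 3 ≤ mult H p)).filter (fun p => mult H p = 2)
              = M2 := by
            rw [filter_filter, hM2]
            exact filter_congr (fun p _ => ⟨fun h => h.2, fun h => ⟨by omega, h⟩⟩)
          rw [e1, e2]
  have hM12 : M1.card + M2.card ≤ P.card := by
    have hdisj : Disjoint M1 M2 := by
      rw [Finset.disjoint_left]
      intro p hp1 hp2
      rw [hM1, mem_filter] at hp1
      rw [hM2, mem_filter] at hp2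
      omega
    calc M1.card + M2.card = (M1 ∪ M2).card := (card_union_of_disjoint hdisj).symm
      _ ≤ P.card := card_le_card (union_subset (filter_subset _ _) (filter_subset _ _))
  have hPcard : P.card = n.choose 2 := by
    rw [hP, card_powersetCard, card_univ, Fintype.card_fin]
  omega

lemma eq_triple {A : Finset (Fin n)} (hcA : A.card = 3) {a b c : Fin n}
    (hab : a ≠ b) (hac : a ≠ c) (hbc : b ≠ c)
    (ha : a ∈ A) (hb : b ∈ A) (hc : c ∈ A) : A = {a, b, c} := by
  have hsub : ({a, b, c} : Finset (Fin n)) ⊆ A := by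
    intro x hx; simp only [mem_insert, mem_singleton] at hx
    rcases hx with rfl | rfl | rfl <;> assumption
  have hcard : ({a, b, c} : Finset (Fin n)).card = 3 := by
    rw [card_insert_of_notMem (by simp [hab, hac]),
        card_insert_of_notMem (by simp [hbc]), card_singleton]
  exact (eq_of_subset_of_card_le hsub (by rw [hcA, hcard])).symm

lemma lower_mem (hn : 3 ≤ n) :
    ∃ H : Finset (Finset (Fin n)), (∀ A ∈ H, A.card = 3) ∧
      ¬ HasBergeCopy H (⊤ : SimpleGraph (Fin 3)) 2 ∧ H.card = (n - 1).choose 2 := by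
  classical
  have hn0 : 0 < n := by omega
  set z : Fin n := ⟨0, hn0⟩ with hz
  set Hs := (((univ : Finset (Fin n)).erase z).powersetCard 2).image (insert z) with hHs
  have hzmem : ∀ s ∈ ((univ : Finset (Fin n)).erase z).powersetCard 2, z ∉ s := by
    intro s hs
    rw [mem_powersetCard] at hs
    exact fun h => (mem_erase.1 (hs.1 h)).1 rfl
  have hmem : ∀ A ∈ Hs, z ∈ A ∧ A.card = 3 := by
    intro A hA
    rw [hHs, mem_image] at hA
    obtain ⟨s, hs, rfl⟩ := hA
    have hcard := (mem_powersetCard.1 hs).2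
    exact ⟨mem_insert_self _ _, by rw [card_insert_of_notMem (hzmem s hs), hcard]⟩
  refine ⟨Hs, fun A hA => (hmem A hA).2, ?_, ?_⟩
  · rintro ⟨i, h, hmain, hdisj⟩
    have hxy : ∃ x y : Fin 3, x ≠ y ∧ i x ≠ z ∧ i y ≠ z := by
      by_cases h0 : i 0 = z
      · exact ⟨1, 2, by decide,
          fun hc => absurd (i.injective (hc.trans h0.symm)) (by decide),
          fun hc => absurd (i.injective (hc.trans h0.symm)) (by decide)⟩
      · by_cases h1 : i 1 = z
        · exact ⟨0, 2, by decide, h0,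
            fun hc => absurd (i.injective (hc.trans h1.symm)) (by decide)⟩
        · exact ⟨0, 1, by decide, h0, h1⟩
    obtain ⟨x, y, hxy', hx, hy⟩ := hxy
    have hedge : s(x, y) ∈ (⊤ : SimpleGraph (Fin 3)).edgeSet := by
      rw [SimpleGraph.mem_edgeSet, SimpleGraph.top_adj]
      exact hxy'
    obtain ⟨hsub, hcard2, hcont⟩ := hmain _ hedge
    obtain ⟨A, hAmem, B, hBmem, hAB⟩ := Finset.one_lt_card.1 (by omega : 1 < (h s(x, y)).card)
    have hA := hmem A (hsub hAmem)
    have hB := hmem B (hsub hBmem)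
    have hixy : i x ≠ i y := fun hc => hxy' (i.injective hc)
    have hAeq : A = {z, i x, i y} :=
      eq_triple hA.2 (Ne.symm hx) (Ne.symm hy) hixy hA.1
        (hcont A hAmem x (by simp)) (hcont A hAmem y (by simp))
    have hBeq : B = {z, i x, i y} :=
      eq_triple hB.2 (Ne.symm hx) (Ne.symm hy) hixy hB.1
        (hcont B hBmem x (by simp)) (hcont B hBmem y (by simp))
    exact hAB (hAeq.trans hBeq.symm)
  · rw [hHs, card_image_of_injOn, card_powersetCard, card_erase_of_mem (mem_univ z),
      card_univ, Fintype.card_fin]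
    intro s hs t ht hst
    have hzs := hzmem s hs
    have hzt := hzmem t ht
    rw [← erase_insert hzs, ← erase_insert hzt, hst]

lemma exBerge_bounds (hn : 3 ≤ n) :
    (n - 1).choose 2 ≤ exBerge n 3 2 (⊤ : SimpleGraph (Fin 3)) ∧
      exBerge n 3 2 (⊤ : SimpleGraph (Fin 3)) ≤ n.choose 2 := by
  obtain ⟨Hs, hh1, hh2, hh3⟩ := lower_mem hn
  have hmemS : (n - 1).choose 2 ∈ {m | ∃ H : Finset (Finset (Fin n)),
      (∀ A ∈ H, A.card = 3) ∧ ¬ HasBergeCopy H (⊤ : SimpleGraph (Fin 3)) 2 ∧ H.card = m} :=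
    ⟨Hs, hh1, hh2, hh3⟩
  have hub : ∀ m ∈ {m | ∃ H : Finset (Finset (Fin n)),
      (∀ A ∈ H, A.card = 3) ∧ ¬ HasBergeCopy H (⊤ : SimpleGraph (Fin 3)) 2 ∧ H.card = m},
      m ≤ n.choose 2 := by
    rintro m ⟨H, hH1, hH2, rfl⟩
    exact upper H hH1 hH2
  have hbdd : BddAbove {m | ∃ H : Finset (Finset (Fin n)),
      (∀ A ∈ H, A.card = 3) ∧ ¬ HasBergeCopy H (⊤ : SimpleGraph (Fin 3)) 2 ∧ H.card = m} :=
    ⟨n.choose 2, hub⟩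
  exact ⟨le_csSup hbdd hmemS, csSup_le ⟨_, hmemS⟩ hub⟩

end BergeProof

theorem exBerge_triangle :
    Filter.Tendsto
      (fun n : ℕ => (exBerge n 3 2 (⊤ : SimpleGraph (Fin 3)) : ℝ) / (n : ℝ) ^ 2)
      Filter.atTop (nhds (1 / 2)) := by
  have hx : Filter.Tendsto (fun n : ℕ => 1 / (n : ℝ)) Filter.atTop (nhds 0) :=
    tendsto_one_div_atTop_nhds_zero_nat
  have hx2 : Filter.Tendsto (fun n : ℕ => 2 / (n : ℝ)) Filter.atTop (nhds 0) := by
    have := hx.const_mul (2 : ℝ)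
    simp only [mul_zero] at this
    refine this.congr (fun n => ?_)
    ring
  have h1 : Filter.Tendsto (fun n : ℕ => 1 - 1 / (n : ℝ)) Filter.atTop (nhds (1 - 0)) :=
    Filter.Tendsto.sub tendsto_const_nhds hx
  have h2 : Filter.Tendsto (fun n : ℕ => 1 - 2 / (n : ℝ)) Filter.atTop (nhds (1 - 0)) :=
    Filter.Tendsto.sub tendsto_const_nhds hx2
  have hg : Filter.Tendsto (fun n : ℕ => (1 - 1 / (n : ℝ)) * (1 - 2 / (n : ℝ)) / 2)
      Filter.atTop (nhds (1 / 2)) := by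
    have h4 := (h1.mul h2).div_const (2 : ℝ)
    norm_num at h4
    exact h4.congr (fun n => by rw [one_div])
  have hh : Filter.Tendsto (fun n : ℕ => (1 - 1 / (n : ℝ)) / 2)
      Filter.atTop (nhds (1 / 2)) := by
    have h4 := h1.div_const (2 : ℝ)
    norm_num at h4
    exact h4.congr (fun n => by rw [one_div])
  have hglow : Filter.Tendsto (fun n : ℕ => (((n - 1).choose 2 : ℕ) : ℝ) / (n : ℝ) ^ 2)
      Filter.atTop (nhds (1 / 2)) := by
    refine Filter.Tendsto.congr' ?_ hg
    filter_upwards [Filter.eventually_atTop.2 ⟨3, fun n hn => hn⟩] with n hn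
    have hn0 : (n : ℝ) ≠ 0 := by
      have : (3 : ℝ) ≤ (n : ℝ) := by exact_mod_cast hn
      linarith
    rw [Nat.cast_choose_two, Nat.cast_sub (by omega : 1 ≤ n)]
    push_cast
    field_simp
    ring
  have hhigh : Filter.Tendsto (fun n : ℕ => ((n.choose 2 : ℕ) : ℝ) / (n : ℝ) ^ 2)
      Filter.atTop (nhds (1 / 2)) := by
    refine Filter.Tendsto.congr' ?_ hh
    filter_upwards [Filter.eventually_atTop.2 ⟨3, fun n hn => hn⟩] with n hn
    have hn0 : (n : ℝ) ≠ 0 := by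
      have : (3 : ℝ) ≤ (n : ℝ) := by exact_mod_cast hn
      linarith
    rw [Nat.cast_choose_two]
    field_simp
  refine tendsto_of_tendsto_of_tendsto_of_le_of_le' hglow hhigh ?_ ?_
  · filter_upwards [Filter.eventually_atTop.2 ⟨3, fun n hn => hn⟩] with n hn
    have hsq : (0 : ℝ) ≤ (n : ℝ) ^ 2 := sq_nonneg _
    have hcast : (((n - 1).choose 2 : ℕ) : ℝ) ≤ (exBerge n 3 2 (⊤ : SimpleGraph (Fin 3)) : ℝ) :=
      Nat.cast_le.2 (BergeProof.exBerge_bounds hn).1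
    exact div_le_div_of_nonneg_right hcast hsq |>.trans_eq rfl
  · filter_upwards [Filter.eventually_atTop.2 ⟨3, fun n hn => hn⟩] with n hn
    have hsq : (0 : ℝ) ≤ (n : ℝ) ^ 2 := sq_nonneg _
    have hcast : (exBerge n 3 2 (⊤ : SimpleGraph (Fin 3)) : ℝ) ≤ ((n.choose 2 : ℕ) : ℝ) :=
      Nat.cast_le.2 (BergeProof.exBerge_bounds hn).2
    exact div_le_div_of_nonneg_right hcast hsq |>.trans_eq rfl
end

section
/- In a 3-uniform hypergraph containing no 2-wise Berge triangle in which every pair of vertices of every hyperedge is 2-heavy, every hyperedge contains at least two 'nice' pairs, i.e., pairs of its vertices contained in exactly two hyperedges. -/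
open Finset

set_option maxHeartbeats 2000000 in
lemma berge_aux {V : Type*} [DecidableEq V]
    (H : Finset (Finset V)) (hunif : ∀ A ∈ H, A.card = 3)
    (a b c : V) (hab : a ≠ b) (hac : a ≠ c) (hbc : b ≠ c)
    (h1 : 3 ≤ (H.filter (fun B => a ∈ B ∧ b ∈ B)).card)
    (h2 : 3 ≤ (H.filter (fun B => a ∈ B ∧ c ∈ B)).card)
    (h3 : 2 ≤ (H.filter (fun B => b ∈ B ∧ c ∈ B)).card) :
    HasBergeCopy H (⊤ : SimpleGraph (Fin 3)) 2 := by
  classical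
  have hinj : Function.Injective ![a, b, c] := by
    intro x y hxy
    fin_cases x <;> fin_cases y <;> simp_all <;> tauto
  set Pab := H.filter (fun B => a ∈ B ∧ b ∈ B) with hPab
  set Pac := H.filter (fun B => a ∈ B ∧ c ∈ B) with hPac
  set Pbc := H.filter (fun B => b ∈ B ∧ c ∈ B) with hPbc
  have key : ∀ B ∈ H, a ∈ B → b ∈ B → c ∈ B → B = {a, b, c} := by
    intro B hB ha hb hc
    have hsub : ({a, b, c} : Finset V) ⊆ B := by
      intro x hx; simp only [mem_insert, mem_singleton] at hx
      rcases hx with rfl | rfl | rfl <;> assumption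
    have hcard : ({a, b, c} : Finset V).card = 3 := by
      rw [card_insert_of_notMem (by simp [hab, hac]),
        card_insert_of_notMem (by simp [hbc]), card_singleton]
    exact (eq_of_subset_of_card_le hsub (by rw [hunif B hB, hcard])).symm
  have hsmall : ∀ (P S : Finset (Finset V)), (∀ D ∈ P ∩ S, D = ({a,b,c} : Finset V)) →
      (P ∩ S).card ≤ 1 := by
    intro P S hPS
    apply card_le_one.2
    intro B hB B' hB'
    rw [hPS B hB, hPS B' hB']
  obtain ⟨Sbc, hSbc, hSbccard⟩ := exists_subset_card_eq h3
  have hd2 : 2 ≤ (Pac \ Sbc).card := by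
    have h4 : (Pac ∩ Sbc).card ≤ 1 := by
      apply hsmall
      intro D hD
      rw [mem_inter] at hD
      have hD1 := mem_filter.1 hD.1
      have hD2 := mem_filter.1 (hSbc hD.2)
      exact key D hD1.1 hD1.2.1 hD2.2.1 hD2.2.2
    have h5 := card_inter_add_card_sdiff Pac Sbc
    omega
  obtain ⟨Sac, hSac, hSaccard⟩ := exists_subset_card_eq hd2
  have hSac' : Sac ⊆ Pac := hSac.trans sdiff_subset
  have hd1 : 2 ≤ (Pab \ (Sbc ∪ Sac)).card := by
    have h4 : (Pab ∩ (Sbc ∪ Sac)).card ≤ 1 := by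
      apply hsmall
      intro D hD
      rw [mem_inter, mem_union] at hD
      have hD1 := mem_filter.1 hD.1
      rcases hD.2 with h | h
      · have hD2 := mem_filter.1 (hSbc h)
        exact key D hD1.1 hD1.2.1 hD1.2.2 hD2.2.2
      · have hD2 := mem_filter.1 (hSac' h)
        exact key D hD1.1 hD1.2.1 hD1.2.2 hD2.2.2
    have h5 := card_inter_add_card_sdiff Pab (Sbc ∪ Sac)
    omega
  obtain ⟨Sab, hSab, hSabcard⟩ := exists_subset_card_eq hd1
  have hSab' : Sab ⊆ Pab := hSab.trans sdiff_subset
  have d1 : Disjoint Sab Sbc := disjoint_left.2 fun B hB hB' =>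
    (notMem_union.1 (mem_sdiff.1 (hSab hB)).2).1 hB'
  have d2 : Disjoint Sab Sac := disjoint_left.2 fun B hB hB' =>
    (notMem_union.1 (mem_sdiff.1 (hSab hB)).2).2 hB'
  have d3 : Disjoint Sac Sbc := disjoint_left.2 fun B hB hB' =>
    (mem_sdiff.1 (hSac hB)).2 hB'
  set M : Fin 3 → Fin 3 → Finset (Finset V) :=
    ![![∅, Sab, Sac], ![Sab, ∅, Sbc], ![Sac, Sbc, ∅]] with hM
  have hMsymm : ∀ x y, M x y = M y x := by
    intro x y; fin_cases x <;> fin_cases y <;> rfl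
  refine ⟨⟨![a, b, c], hinj⟩, Sym2.lift ⟨M, hMsymm⟩, ?_, ?_⟩
  · intro e he
    induction e using Sym2.ind with
    | _ x y =>
      simp only [SimpleGraph.top_adj, SimpleGraph.mem_edgeSet] at he
      have main : ∀ (x y : Fin 3) (S : Finset (Finset V)),
          S ⊆ H.filter (fun B => ![a,b,c] x ∈ B ∧ ![a,b,c] y ∈ B) → S.card = 2 →
          S ⊆ H ∧ S.card = 2 ∧ ∀ A ∈ S, ∀ z ∈ s(x, y), (![a,b,c] : Fin 3 → V) z ∈ A := by
        intro x y S hS hc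
        refine ⟨fun B hB => mem_of_mem_filter B (hS hB), hc, ?_⟩
        intro A hA z hz
        rw [Sym2.mem_iff] at hz
        have h := (mem_filter.1 (hS hA)).2
        rcases hz with rfl | rfl
        · exact h.1
        · exact h.2
      have swap : ∀ (u v : V) (S : Finset (Finset V)),
          S ⊆ H.filter (fun B => u ∈ B ∧ v ∈ B) →
          S ⊆ H.filter (fun B => v ∈ B ∧ u ∈ B) := by
        intro u v S hS B hB
        have h := mem_filter.1 (hS hB)
        exact mem_filter.2 ⟨h.1, h.2.2, h.2.1⟩
      fin_cases x <;> fin_cases y <;>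
        first
        | exact absurd rfl he
        | exact main _ _ Sab hSab' hSabcard
        | exact main _ _ Sac hSac' hSaccard
        | exact main _ _ Sbc hSbc hSbccard
        | exact main _ _ Sab (swap a b Sab hSab') hSabcard
        | exact main _ _ Sac (swap a c Sac hSac') hSaccard
        | exact main _ _ Sbc (swap b c Sbc hSbc) hSbccard
  · intro e he e' he' hne
    induction e using Sym2.ind with
    | _ x y =>
      induction e' using Sym2.ind with
      | _ x' y' =>
        simp only [SimpleGraph.top_adj, SimpleGraph.mem_edgeSet] at he he'
        fin_cases x <;> fin_cases y <;> fin_cases x' <;> fin_cases y' <;>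
          first
          | exact absurd rfl he
          | exact absurd rfl he'
          | exact absurd rfl hne
          | exact absurd Sym2.eq_swap hne
          | exact d1 | exact d1.symm | exact d2 | exact d2.symm
          | exact d3 | exact d3.symm

theorem two_nice_pairs {V : Type*} [DecidableEq V]
    (H : Finset (Finset V)) (hunif : ∀ A ∈ H, A.card = 3)
    (hfree : ¬ HasBergeCopy H (⊤ : SimpleGraph (Fin 3)) 2)
    (hheavy : ∀ A ∈ H, ∀ u ∈ A, ∀ v ∈ A, u ≠ v →
      2 ≤ (H.filter (fun B => u ∈ B ∧ v ∈ B)).card) :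
    ∀ A ∈ H, ∃ u v u' v' : V, u ∈ A ∧ v ∈ A ∧ u' ∈ A ∧ v' ∈ A ∧
      u ≠ v ∧ u' ≠ v' ∧ ({u, v} : Finset V) ≠ {u', v'} ∧
      (H.filter (fun B => u ∈ B ∧ v ∈ B)).card = 2 ∧
      (H.filter (fun B => u' ∈ B ∧ v' ∈ B)).card = 2 := by
  intro A hA
  obtain ⟨a, b, c, hab, hac, hbc, rfl⟩ := Finset.card_eq_three.1 (hunif A hA)
  have ha : a ∈ ({a, b, c} : Finset V) := by simp
  have hb : b ∈ ({a, b, c} : Finset V) := by simp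
  have hc : c ∈ ({a, b, c} : Finset V) := by simp
  have comm : ∀ u v : V, H.filter (fun B => u ∈ B ∧ v ∈ B)
      = H.filter (fun B => v ∈ B ∧ u ∈ B) := by
    intro u v
    exact filter_congr (fun B _ => by rw [and_comm])
  have g1 := hheavy _ hA a ha b hb hab
  have g2 := hheavy _ hA a ha c hc hac
  have g3 := hheavy _ hA b hb c hc hbc
  have ne1 : ({a, b} : Finset V) ≠ {a, c} := by
    intro h
    have : b ∈ ({a, c} : Finset V) := h ▸ (by simp)
    simp only [mem_insert, mem_singleton] at this
    rcases this with h' | h' <;> [exact hab h'.symm; exact hbc h']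
  have ne2 : ({a, b} : Finset V) ≠ {b, c} := by
    intro h
    have : a ∈ ({b, c} : Finset V) := h ▸ (by simp)
    simp only [mem_insert, mem_singleton] at this
    rcases this with h' | h' <;> [exact hab h'; exact hac h']
  have ne3 : ({a, c} : Finset V) ≠ {b, c} := by
    intro h
    have : a ∈ ({b, c} : Finset V) := h ▸ (by simp)
    simp only [mem_insert, mem_singleton] at this
    rcases this with h' | h' <;> [exact hab h'; exact hac h']
  by_cases e1 : (H.filter (fun B => a ∈ B ∧ b ∈ B)).card = 2 <;>
    by_cases e2 : (H.filter (fun B => a ∈ B ∧ c ∈ B)).card = 2 <;>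
    by_cases e3 : (H.filter (fun B => b ∈ B ∧ c ∈ B)).card = 2
  · exact ⟨a, b, a, c, ha, hb, ha, hc, hab, hac, ne1, e1, e2⟩
  · exact ⟨a, b, a, c, ha, hb, ha, hc, hab, hac, ne1, e1, e2⟩
  · exact ⟨a, b, b, c, ha, hb, hb, hc, hab, hbc, ne2, e1, e3⟩
  · -- ¬e2, ¬e3 : both ac and bc heavy ≥ 3, shared vertex c
    exfalso
    apply hfree
    refine berge_aux H hunif c a b hac.symm hbc.symm hab ?_ ?_ ?_
    · rw [← comm a c]; omega
    · rw [← comm b c]; omega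
    · omega
  · exact ⟨a, c, b, c, ha, hc, hb, hc, hac, hbc, ne3, e2, e3⟩
  · -- ¬e1, ¬e3 : shared vertex b
    exfalso
    apply hfree
    refine berge_aux H hunif b a c hab.symm hbc hac ?_ ?_ ?_
    · rw [← comm a b]; omega
    · omega
    · omega
  · -- ¬e1, ¬e2 : shared vertex a
    exfalso
    apply hfree
    exact berge_aux H hunif a b c hab hac hbc (by omega) (by omega) g3
  · exfalso
    apply hfree
    exact berge_aux H hunif a b c hab hac hbc (by omega) (by omega) (by omega)
end

section
/- For t ≥ 3, ex_3(n, H_t S_2) ≤ (t + o(1))·n²/6, where S_2 is the path with two edges (cherry): any 3-uniform hypergraph on n vertices with no t-heavy copy of S_2 has at most (t/6 + o(1))·n² hyperedges. -/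
open Finset

lemma heavy_cherry_key (t n : ℕ) (ht : 3 ≤ t) (H : Finset (Finset (Fin n)))
    (h3 : ∀ A ∈ H, A.card = 3)
    (hno : ¬ HasHeavyCopy H (SimpleGraph.pathGraph 3) t) :
    6 * H.card ≤ t * n ^ 2 := by
  classical
  set d : Fin n → Fin n → ℕ :=
    fun x y => (H.filter (fun A => x ∈ A ∧ y ∈ A)).card with hd
  have dsymm : ∀ x y, d x y = d y x := by
    intro x y
    simp only [hd]
    congr 1
    apply filter_congr
    intro A _
    simp [and_comm]
  -- no two heavy pairs share the first vertex
  have hmatch : ∀ x y z : Fin n, x ≠ y → x ≠ z → y ≠ z →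
      t ≤ d x y → t ≤ d x z → False := by
    intro x y z hxy hxz hyz h1 h2
    apply hno
    have hinj : Function.Injective ![y, x, z] := by
      intro a b hab
      fin_cases a <;> fin_cases b <;> simp_all <;>
        first
        | rfl
        | (exact absurd hab.symm hxy)
        | (exact absurd hab hxy)
        | (exact absurd hab hyz)
        | (exact absurd hab.symm hyz)
        | (exact absurd hab hxz)
        | (exact absurd hab.symm hxz)
    refine ⟨⟨![y, x, z], hinj⟩, ?_⟩
    intro a b hab
    rw [SimpleGraph.pathGraph_adj] at hab
    have h1' : t ≤ d y x := dsymm x y ▸ h1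
    have h2' : t ≤ d z x := dsymm x z ▸ h2
    show t ≤ d (![y, x, z] a) (![y, x, z] b)
    fin_cases a <;> fin_cases b <;>
      first
        | exact absurd hab (by decide)
        | exact h1
        | exact h1'
        | exact h2
        | exact h2' 
  -- each pair is in at most n hyperedges
  have hdle : ∀ x y : Fin n, x ≠ y → d x y ≤ n := by
    intro x y hxy
    have hsub : H.filter (fun A => x ∈ A ∧ y ∈ A) ⊆
        (univ : Finset (Fin n)).image (fun z => insert z {x, y}) := by
      intro A hA
      simp only [mem_filter] at hA
      obtain ⟨hAH, hx, hy⟩ := hA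
      have hpsub : ({x, y} : Finset (Fin n)) ⊆ A := by
        intro w hw
        simp only [mem_insert, mem_singleton] at hw
        rcases hw with rfl | rfl <;> assumption
      have hc1 : (A \ {x, y}).card = 1 := by
        rw [card_sdiff_of_subset hpsub, h3 A hAH, card_pair hxy]
      obtain ⟨z, hz⟩ := card_eq_one.mp hc1
      refine mem_image.mpr ⟨z, mem_univ z, ?_⟩
      have hu := sdiff_union_of_subset hpsub
      rw [hz, ← Finset.insert_eq] at hu
      exact hu
    calc d x y ≤ ((univ : Finset (Fin n)).image (fun z => insert z ({x, y} : Finset (Fin n)))).card :=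
          card_le_card hsub
      _ ≤ (univ : Finset (Fin n)).card := card_image_le
      _ = n := by simp
  -- double counting
  have hsum : ∑ p ∈ (univ : Finset (Fin n)).offDiag, d p.1 p.2 = 6 * H.card := by
    have e1 : ∀ p ∈ (univ : Finset (Fin n)).offDiag,
        d p.1 p.2 = ∑ A ∈ H, if p.1 ∈ A ∧ p.2 ∈ A then 1 else 0 := by
      intro p _
      simp only [hd]
      exact card_filter _ _
    rw [Finset.sum_congr rfl e1, Finset.sum_comm]
    have e2 : ∀ A ∈ H,
        (∑ p ∈ (univ : Finset (Fin n)).offDiag, if p.1 ∈ A ∧ p.2 ∈ A then 1 else 0) = 6 := by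
      intro A hA
      rw [← Finset.sum_filter]
      simp only [Finset.sum_const, smul_eq_mul, mul_one]
      have : (univ : Finset (Fin n)).offDiag.filter (fun p => p.1 ∈ A ∧ p.2 ∈ A)
          = A.offDiag := by
        ext ⟨x, y⟩
        simp only [mem_filter, Finset.mem_offDiag, mem_univ, true_and]
        tauto
      rw [this, Finset.offDiag_card, h3 A hA]
    rw [Finset.sum_congr rfl e2, Finset.sum_const, smul_eq_mul, mul_comm]
  -- set of heavy ordered pairs
  set S := (univ : Finset (Fin n)).offDiag.filter (fun p => t ≤ d p.1 p.2) with hS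
  have hScard : S.card ≤ n := by
    have : S.card ≤ (univ : Finset (Fin n)).card := by
      apply card_le_card_of_injOn (fun p => p.1) (fun _ _ => mem_univ _)
      intro p hp q hq hpq
      obtain ⟨hpd, hp2⟩ := mem_filter.mp hp
      obtain ⟨hqd, hq2⟩ := mem_filter.mp hq
      have hp1 := (Finset.mem_offDiag.mp hpd).2.2
      have hq1 := (Finset.mem_offDiag.mp hqd).2.2
      have hpq' : p.1 = q.1 := hpq
      have : p.2 = q.2 := by
        by_contra hne
        exact hmatch p.1 p.2 q.2 hp1 (hpq' ▸ hq1) hne hp2 (hpq' ▸ hq2)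
      exact Prod.ext hpq' this
    simpa using this
  have hsplit := Finset.sum_filter_add_sum_filter_not
    ((univ : Finset (Fin n)).offDiag) (fun p => t ≤ d p.1 p.2) (fun p => d p.1 p.2)
  have hheavy : ∑ p ∈ S, d p.1 p.2 ≤ n * n := by
    calc ∑ p ∈ S, d p.1 p.2 ≤ ∑ _p ∈ S, n := by
          apply Finset.sum_le_sum
          intro p hp
          have hpd := (mem_filter.mp hp).1
          exact hdle p.1 p.2 (Finset.mem_offDiag.mp hpd).2.2
      _ = S.card * n := by rw [Finset.sum_const, smul_eq_mul]
      _ ≤ n * n := Nat.mul_le_mul_right n hScard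
  have hlight : ∑ p ∈ (univ : Finset (Fin n)).offDiag.filter (fun p => ¬ t ≤ d p.1 p.2),
      d p.1 p.2 ≤ (n * n) * (t - 1) := by
    calc ∑ p ∈ (univ : Finset (Fin n)).offDiag.filter (fun p => ¬ t ≤ d p.1 p.2), d p.1 p.2
        ≤ ∑ _p ∈ (univ : Finset (Fin n)).offDiag.filter (fun p => ¬ t ≤ d p.1 p.2), (t - 1) := by
          apply Finset.sum_le_sum
          intro p hp
          simp only [mem_filter] at hp
          omega
      _ = ((univ : Finset (Fin n)).offDiag.filter (fun p => ¬ t ≤ d p.1 p.2)).card * (t - 1) := by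
          rw [Finset.sum_const, smul_eq_mul]
      _ ≤ (n * n) * (t - 1) := by
          apply Nat.mul_le_mul_right
          calc ((univ : Finset (Fin n)).offDiag.filter _).card
              ≤ (univ : Finset (Fin n)).offDiag.card := card_filter_le _ _
            _ ≤ n * n := by
                rw [Finset.offDiag_card]
                simp only [card_univ, Fintype.card_fin]
                omega
  obtain ⟨s, rfl⟩ : ∃ s, t = s + 1 := ⟨t - 1, by omega⟩
  have : 6 * H.card ≤ n * n + (n * n) * (s + 1 - 1) := by
    rw [← hsum, ← hsplit]
    exact Nat.add_le_add hheavy hlight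
  simp only [Nat.add_sub_cancel] at this
  nlinarith [this, sq_nonneg n]

private lemma heavy_cherry_empty (t n : ℕ) (ht : 3 ≤ t) :
    ¬ HasHeavyCopy (∅ : Finset (Finset (Fin n))) (SimpleGraph.pathGraph 3) t := by
  rintro ⟨i, hi⟩
  have hadj : (SimpleGraph.pathGraph 3).Adj 0 1 := by
    rw [SimpleGraph.pathGraph_adj]; left; rfl
  have := hi 0 1 hadj
  simp only [Finset.filter_empty, Finset.card_empty] at this
  omega

theorem exHeavy_cherry_upper (t : ℕ) (ht : 3 ≤ t) :
    ∀ ε : ℝ, 0 < ε → ∃ N : ℕ, ∀ n ≥ N,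
      (exHeavy n 3 t (SimpleGraph.pathGraph 3) : ℝ) ≤
        ((t : ℝ) / 6 + ε) * (n : ℝ) ^ 2 := by
  intro ε hε
  refine ⟨0, fun n _ => ?_⟩
  unfold exHeavy
  set Sset := {m | ∃ H : Finset (Finset (Fin n)), (∀ A ∈ H, A.card = 3) ∧
    ¬ HasHeavyCopy H (SimpleGraph.pathGraph 3) t ∧ H.card = m} with hSset
  have hbdd : ∀ m ∈ Sset, m ≤ t * n ^ 2 := by
    rintro m ⟨H, h3, hno, rfl⟩
    have := heavy_cherry_key t n ht H h3 hno
    omega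
  have hne : Sset.Nonempty := ⟨0, ∅, by simp, heavy_cherry_empty t n ht, by simp⟩
  have hmem := Nat.sSup_mem hne ⟨t * n ^ 2, hbdd⟩
  obtain ⟨H, h3, hno, hcard⟩ := hmem
  have h6 : 6 * sSup Sset ≤ t * n ^ 2 := by
    rw [← hcard]; exact heavy_cherry_key t n ht H h3 hno
  have h6' : (6 : ℝ) * ((sSup Sset : ℕ) : ℝ) ≤ (t : ℝ) * (n : ℝ) ^ 2 := by
    exact_mod_cast h6
  nlinarith [mul_nonneg hε.le (sq_nonneg (n : ℝ))]
end

section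
/- Let t ≥ 2 and let F be a connected graph. Suppose G is a ((t−1)/2)-regular F-free graph on m vertices (t odd). Construct the 3-uniform hypergraph H on ⌊n/m⌋ disjoint m-sets A_1, …, A_{⌊n/m⌋}, each carrying a copy of G, whose hyperedges are all triples consisting of an edge of the copy of G inside one A_i together with one vertex of a different A_j. Then every pair of vertices lying in different parts is contained in exactly t−1 hyperedges, the t-heavy pairs form vertex-disjoint copies of G, and hence H contains no t-heavy copy of F. -/
open Finset

/-- The construction on `p` parts of size `m`: all triples made of an edge of the copy of
`G` inside one part together with one vertex of a different part. -/
def conH2 (p m : ℕ) (G : SimpleGraph (Fin m)) [DecidableRel G.Adj] :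
    Finset (Finset (Fin p × Fin m)) :=
  ((Finset.univ : Finset (Fin p × Fin m)).powersetCard 3).filter
    (fun B => ∃ i j : Fin p, ∃ a b c : Fin m, i ≠ j ∧ G.Adj a b ∧
      B = {(i, a), (i, b), (j, c)})

section Helpers

variable {p m : ℕ} {G : SimpleGraph (Fin m)} [DecidableRel G.Adj]

lemma triple_card (u v w : Fin p × Fin m) (h1 : u ≠ v) (h2 : u ≠ w) (h3 : v ≠ w) :
    ({u, v, w} : Finset (Fin p × Fin m)).card = 3 := by
  rw [Finset.card_insert_of_notMem (by simp [h1, h2]),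
    Finset.card_insert_of_notMem (by simp [h3]), Finset.card_singleton]

lemma mem_conH2_iff (B : Finset (Fin p × Fin m)) :
    B ∈ conH2 p m G ↔ ∃ i j : Fin p, ∃ a b c : Fin m, i ≠ j ∧ G.Adj a b ∧
      B = {(i, a), (i, b), (j, c)} := by
  constructor
  · intro h
    exact (Finset.mem_filter.mp h).2
  · rintro ⟨i, j, a, b, c, hij, hab, rfl⟩
    refine Finset.mem_filter.mpr ⟨?_, i, j, a, b, c, hij, hab, rfl⟩
    rw [Finset.mem_powersetCard_univ]
    exact triple_card _ _ _ (by simp [hab.ne]) (by simp [hij]) (by simp [hij])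

lemma mem_pair_filter {u v : Fin p × Fin m} (huv : u.1 ≠ v.1) (B : Finset (Fin p × Fin m)) :
    B ∈ (conH2 p m G).filter (fun A => u ∈ A ∧ v ∈ A) ↔
      (∃ b ∈ G.neighborFinset u.2, B = {u, (u.1, b), v}) ∨
      (∃ d ∈ G.neighborFinset v.2, B = {v, (v.1, d), u}) := by
  rw [Finset.mem_filter, mem_conH2_iff]
  constructor
  · rintro ⟨⟨i, j, a, b, c, hij, hab, rfl⟩, hu, hv⟩
    simp only [Finset.mem_insert, Finset.mem_singleton] at hu hv
    rcases hu with rfl | rfl | rfl <;> rcases hv with h | h | h <;> subst h <;> try simp at huv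
    · left; exact ⟨b, by simpa using hab, rfl⟩
    · left; exact ⟨a, by simpa using hab.symm, by ext x; simp; try tauto⟩
    · right; exact ⟨b, by simpa using hab, by ext x; simp; try tauto⟩
    · right; exact ⟨a, by simpa using hab.symm, by ext x; simp; try tauto⟩
  · rintro (⟨b, hb, rfl⟩ | ⟨d, hd, rfl⟩)
    · rw [SimpleGraph.mem_neighborFinset] at hb
      exact ⟨⟨u.1, v.1, u.2, b, v.2, huv, hb, by simp⟩, by simp, by simp⟩
    · rw [SimpleGraph.mem_neighborFinset] at hd
      exact ⟨⟨v.1, u.1, v.2, d, u.2, huv.symm, hd, by simp⟩, by simp, by simp⟩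

lemma pair_filter_card {t : ℕ} (hodd : Odd t) (ht : 2 ≤ t)
    (hreg : G.IsRegularOfDegree ((t - 1) / 2))
    {u v : Fin p × Fin m} (huv : u.1 ≠ v.1) :
    ((conH2 p m G).filter (fun A => u ∈ A ∧ v ∈ A)).card = t - 1 := by
  have hset : (conH2 p m G).filter (fun A => u ∈ A ∧ v ∈ A) =
      (G.neighborFinset u.2).image (fun b => ({u, (u.1, b), v} : Finset (Fin p × Fin m))) ∪
      (G.neighborFinset v.2).image (fun d => ({v, (v.1, d), u} : Finset (Fin p × Fin m))) := by
    ext B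
    rw [mem_pair_filter huv, Finset.mem_union, Finset.mem_image, Finset.mem_image]
    simp [eq_comm]
  rw [hset, Finset.card_union_of_disjoint, Finset.card_image_of_injOn,
    Finset.card_image_of_injOn, SimpleGraph.card_neighborFinset_eq_degree,
    SimpleGraph.card_neighborFinset_eq_degree, hreg u.2, hreg v.2]
  · obtain ⟨k, rfl⟩ := hodd; omega
  · intro d1 h1 d2 h2 he
    simp only [Finset.mem_coe, SimpleGraph.mem_neighborFinset] at h1 h2
    have he' : ({v, (v.1, d1), u} : Finset (Fin p × Fin m)) = {v, (v.1, d2), u} := he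
    have hm : (v.1, d1) ∈ ({v, (v.1, d2), u} : Finset (Fin p × Fin m)) := by
      rw [← he']; simp
    simp only [Finset.mem_insert, Finset.mem_singleton] at hm
    rcases hm with h | h | h
    · exact absurd (congrArg Prod.snd h) h1.ne'
    · exact congrArg Prod.snd h
    · exact absurd (congrArg Prod.fst h) huv.symm
  · intro b1 h1 b2 h2 he
    simp only [Finset.mem_coe, SimpleGraph.mem_neighborFinset] at h1 h2
    have he' : ({u, (u.1, b1), v} : Finset (Fin p × Fin m)) = {u, (u.1, b2), v} := he
    have hm : (u.1, b1) ∈ ({u, (u.1, b2), v} : Finset (Fin p × Fin m)) := by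
      rw [← he']; simp
    simp only [Finset.mem_insert, Finset.mem_singleton] at hm
    rcases hm with h | h | h
    · exact absurd (congrArg Prod.snd h) h1.ne'
    · exact congrArg Prod.snd h
    · exact absurd (congrArg Prod.fst h) huv
  · rw [Finset.disjoint_left]
    rintro B hB1 hB2
    obtain ⟨b, hb, rfl⟩ := Finset.mem_image.mp hB1
    obtain ⟨d, hd, he⟩ := Finset.mem_image.mp hB2
    rw [SimpleGraph.mem_neighborFinset] at hb hd
    have hm : (u.1, b) ∈ ({v, (v.1, d), u} : Finset (Fin p × Fin m)) := by
      rw [he]; simp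
    simp only [Finset.mem_insert, Finset.mem_singleton] at hm
    rcases hm with h | h | h
    · rw [Prod.ext_iff] at h; exact huv h.1
    · rw [Prod.ext_iff] at h; exact huv h.1
    · exact hb.ne' (congrArg Prod.snd h)

lemma same_part_adj {B : Finset (Fin p × Fin m)} (hB : B ∈ conH2 p m G)
    {u v : Fin p × Fin m} (hu : u ∈ B) (hv : v ∈ B) (hne : u ≠ v) (h1 : u.1 = v.1) :
    G.Adj u.2 v.2 := by
  obtain ⟨i, j, a, b, c, hij, hab, rfl⟩ := (mem_conH2_iff B).mp hB
  simp only [Finset.mem_insert, Finset.mem_singleton] at hu hv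
  rcases hu with rfl | rfl | rfl <;> rcases hv with h | h | h <;> subst h <;>
    simp_all <;> first | exact hab | exact hab.symm

lemma same_part_lower {u v : Fin p × Fin m} (h1 : u.1 = v.1) (hadj : G.Adj u.2 v.2) :
    (p - 1) * m ≤ ((conH2 p m G).filter (fun A => u ∈ A ∧ v ∈ A)).card := by
  classical
  have hsub : ((Finset.univ.filter (fun j : Fin p => j ≠ u.1)) ×ˢ (Finset.univ : Finset (Fin m))).image
      (fun jc => ({u, v, jc} : Finset (Fin p × Fin m))) ⊆
      (conH2 p m G).filter (fun A => u ∈ A ∧ v ∈ A) := by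
    intro B hB
    obtain ⟨jc, hjc, rfl⟩ := Finset.mem_image.mp hB
    simp only [Finset.mem_product, Finset.mem_filter, Finset.mem_univ, true_and] at hjc
    refine Finset.mem_filter.mpr ⟨(mem_conH2_iff _).mpr
      ⟨u.1, jc.1, u.2, v.2, jc.2, hjc.1.symm, hadj, ?_⟩, by simp, by simp⟩
    have : (u.1, v.2) = v := by rw [h1]
    simp [this]
  calc (p - 1) * m = ((Finset.univ.filter (fun j : Fin p => j ≠ u.1)) ×ˢ
        (Finset.univ : Finset (Fin m))).card := by
        rw [Finset.card_product, Finset.filter_ne', Finset.card_erase_of_mem (Finset.mem_univ _)]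
        simp
    _ ≤ _ := by
        refine le_trans (le_of_eq (Finset.card_image_of_injOn ?_).symm) (Finset.card_le_card hsub)
        intro x hx y hy he
        simp only [Finset.coe_product, Set.mem_prod, Finset.mem_coe, Finset.mem_filter,
          Finset.mem_univ, true_and] at hx hy
        have he' : ({u, v, x} : Finset (Fin p × Fin m)) = {u, v, y} := he
        have hm : x ∈ ({u, v, y} : Finset (Fin p × Fin m)) := by
          rw [← he']; simp
        simp only [Finset.mem_insert, Finset.mem_singleton] at hm
        rcases hm with h | h | h
        · exact ((congrArg Prod.fst h ▸ hx.1) rfl).elim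
        · exact ((h1 ▸ congrArg Prod.fst h ▸ hx.1) rfl).elim
        · exact h

end Helpers

theorem conH2_no_heavy_copy {α : Type*} (F : SimpleGraph α) (hconn : F.Connected)
    (t m p : ℕ) (ht : 2 ≤ t) (hodd : Odd t) (hp : 2 ≤ p) (hpm : t ≤ (p - 1) * m)
    (G : SimpleGraph (Fin m)) [DecidableRel G.Adj]
    (hreg : G.IsRegularOfDegree ((t - 1) / 2))
    (hfree : ¬ GraphContains F G) :
    (∀ u v : Fin p × Fin m, u.1 ≠ v.1 →
      ((conH2 p m G).filter (fun A => u ∈ A ∧ v ∈ A)).card = t - 1) ∧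
    (∀ u v : Fin p × Fin m, u ≠ v →
      (t ≤ ((conH2 p m G).filter (fun A => u ∈ A ∧ v ∈ A)).card ↔
        u.1 = v.1 ∧ G.Adj u.2 v.2)) ∧
    ¬ HasHeavyCopy (conH2 p m G) F t := by
  have part1 : ∀ u v : Fin p × Fin m, u.1 ≠ v.1 →
      ((conH2 p m G).filter (fun A => u ∈ A ∧ v ∈ A)).card = t - 1 :=
    fun u v huv => pair_filter_card hodd ht hreg huv
  have part2 : ∀ u v : Fin p × Fin m, u ≠ v →
      (t ≤ ((conH2 p m G).filter (fun A => u ∈ A ∧ v ∈ A)).card ↔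
        u.1 = v.1 ∧ G.Adj u.2 v.2) := by
    intro u v hne
    constructor
    · intro hle
      by_cases h1 : u.1 = v.1
      · have hpos : 0 < ((conH2 p m G).filter (fun A => u ∈ A ∧ v ∈ A)).card := by omega
        obtain ⟨B, hB⟩ := Finset.card_pos.mp hpos
        obtain ⟨hB1, hB2, hB3⟩ := Finset.mem_filter.mp hB
        exact ⟨h1, same_part_adj hB1 hB2 hB3 hne h1⟩
      · rw [part1 u v h1] at hle; omega
    · rintro ⟨h1, hadj⟩
      exact le_trans hpm (same_part_lower h1 hadj)
  refine ⟨part1, part2, ?_⟩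
  rintro ⟨i, hi⟩
  have key : ∀ x y, F.Adj x y → (i x).1 = (i y).1 ∧ G.Adj (i x).2 (i y).2 := by
    intro x y hxy
    exact (part2 _ _ (fun he => hxy.ne (i.injective he))).mp (hi x y hxy)
  have hpart : ∀ x y : α, F.Reachable x y → (i x).1 = (i y).1 := by
    intro x y h
    obtain ⟨w⟩ := h
    induction w with
    | nil => rfl
    | cons h w ih => exact (key _ _ h).1.trans ih
  refine hfree ⟨⟨fun x => (i x).2, ?_⟩, fun x y h => (key x y h).2⟩
  intro x y hxy
  apply i.injective
  exact Prod.ext (hpart x y (hconn.preconnected x y)) hxy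
end
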